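/- Let P be a finite poset. For any k = 0, 1, ..., #P, the k-chain distribution chain(k) on the distributive lattice J(P) of order ideals of P is toggle-symmetric. -/

import Mathlib

open scoped Classical

noncomputable section

namespace CDEPaper

/-- The down-degree of `p`: the number of elements that `p` covers, as a real number. -/
def ddeg {α : Type*} [PartialOrder α] (p : α) : ℝ :=
  (Nat.card {q : α // q ⋖ p} : ℝ)

/-- The expectation of the statistic `f` with respect to the weights `μ`. -/
def expect {α : Type*} (μ : α → ℝ) (f : α → ℝ) : ℝ :=
  ∑ᶠ p, μ p * f p

/-- The uniform distribution on a finite type. -/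
def uni (α : Type*) : α → ℝ :=
  fun _ => (Nat.card α : ℝ)⁻¹

/-- `μ` is a probability distribution. -/
def IsProbDist {α : Type*} (μ : α → ℝ) : Prop :=
  (∀ x, 0 ≤ μ x) ∧ (∑ᶠ x, μ x) = 1

/-- The `k`-chain distribution: each `p` gets probability proportional to the number of
`k`-chains (strictly increasing sequences `c₀ < c₁ < ⋯ < c_k`) passing through `p`. -/
def chainDist (α : Type*) [PartialOrder α] (k : ℕ) : α → ℝ := fun p =>
  (Nat.card {c : Fin (k + 1) → α // StrictMono c ∧ ∃ i, c i = p} : ℝ) /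
    (((k : ℝ) + 1) * (Nat.card {c : Fin (k + 1) → α // StrictMono c} : ℝ))

/-- The `m`-multichain distribution: each `p` gets probability proportional to the number of
`m`-multichains (weakly increasing sequences) passing through `p`. -/
def mchainDist (α : Type*) [PartialOrder α] (m : ℕ) : α → ℝ := fun p =>
  (Nat.card {c : Fin (m + 1) → α // Monotone c ∧ ∃ i, c i = p} : ℝ) /
    (Nat.card {cq : (Fin (m + 1) → α) × α // Monotone cq.1 ∧ ∃ i, cq.1 i = cq.2} : ℝ)

/-- The modified `m`-multichain distribution: each `p` gets probability proportional to the
number of pairs `(c, i)` where `c` is an `m`-multichain and `c i = p`. -/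
def mhatDist (α : Type*) [PartialOrder α] (m : ℕ) : α → ℝ := fun p =>
  (Nat.card {ci : (Fin (m + 1) → α) × Fin (m + 1) // Monotone ci.1 ∧ ci.1 ci.2 = p} : ℝ) /
    (((m : ℝ) + 1) * (Nat.card {c : Fin (m + 1) → α // Monotone c} : ℝ))

/-- The maximal chain distribution: each `p` gets probability proportional to the number of
maximal chains passing through `p`. -/
def maxchainDist (α : Type*) [PartialOrder α] : α → ℝ := fun p =>
  (Nat.card {C : Set α // IsMaxChain (· ≤ ·) C ∧ p ∈ C} : ℝ) /
    (Nat.card {Cq : Set α × α // IsMaxChain (· ≤ ·) Cq.1 ∧ Cq.2 ∈ Cq.1} : ℝ)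

/-- A poset has coincidental down-degree expectations (CDE). -/
def IsCDE (α : Type*) [PartialOrder α] : Prop :=
  expect (maxchainDist α) ddeg = expect (uni α) ddeg

/-- A poset is mCDE: the expected down-degree with respect to the `k`-chain distribution agrees
with the uniform expected down-degree for every `k = 0, 1, …, r` (i.e. every `k` for which a
`k`-chain exists). -/
def IsMCDE (α : Type*) [PartialOrder α] : Prop :=
  ∀ k : ℕ, (∃ c : Fin (k + 1) → α, StrictMono c) →
    expect (chainDist α k) ddeg = expect (uni α) ddeg

/-- The distributive lattice `J(P)` of order ideals (lower sets) of a poset, ordered by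
inclusion. -/
abbrev OIdeal (α : Type*) [PartialOrder α] : Type _ := {I : Set α // IsLowerSet I}

/-- The indicator statistic that `p` can be toggled into the order ideal `I`. -/
def Tplus {α : Type*} [PartialOrder α] (p : α) (I : OIdeal α) : ℝ :=
  if p ∉ I.1 ∧ IsLowerSet (I.1 ∪ {p}) then 1 else 0

/-- The indicator statistic that `p` can be toggled out of the order ideal `I`. -/
def Tminus {α : Type*} [PartialOrder α] (p : α) (I : OIdeal α) : ℝ :=
  if p ∈ I.1 ∧ IsLowerSet (I.1 \ {p}) then 1 else 0

/-- A distribution on `J(P)` is toggle-symmetric if for every `p` the probability that `p` can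
be toggled in equals the probability that `p` can be toggled out. -/
def ToggleSymmetric {α : Type*} [PartialOrder α] (μ : OIdeal α → ℝ) : Prop :=
  ∀ p : α, expect μ (Tplus p) = expect μ (Tminus p)

/-- `J(P)` is toggle-CDE (tCDE): every toggle-symmetric probability distribution has the same
expected down-degree as the uniform distribution. -/
def IsTCDE (α : Type*) [PartialOrder α] : Prop :=
  ∀ μ : OIdeal α → ℝ, IsProbDist μ → ToggleSymmetric μ →
    expect μ ddeg = expect (uni (OIdeal α)) ddeg

end CDEPaper
namespace CDEPaper

/-! ### Skew shapes and shifted shapes -/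

/-- The boxes of the skew shape `λ/ν` of height `a`, in matrix coordinates with 1-based rows
and columns: row `i` (for `1 ≤ i ≤ a`) consists of the boxes `[i,j]` with `ν i < j ≤ λ i`.
The poset structure is the one induced from the componentwise (product) order on `ℕ × ℕ`. -/
def skewCells (a : ℕ) (lam nu : ℕ → ℕ) : Set (ℕ × ℕ) :=
  {b | 1 ≤ b.1 ∧ b.1 ≤ a ∧ nu b.1 < b.2 ∧ b.2 ≤ lam b.1}

/-- The boxes of the shifted Young diagram of a strict partition `λ` of length `l`:
the boxes `[i,j]` with `1 ≤ i ≤ l` and `i ≤ j ≤ λ i + i - 1`.  The poset structure is the one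
induced from the componentwise (product) order on `ℕ × ℕ`. -/
def shiftCells (l : ℕ) (lam : ℕ → ℕ) : Set (ℕ × ℕ) :=
  {b | 1 ≤ b.1 ∧ b.1 ≤ l ∧ b.1 ≤ b.2 ∧ b.2 < lam b.1 + b.1}

/-- The shifted rook statistic `R^shift_{ij}` on order ideals of (the poset of) `S`. -/
def Rshift (S : Set (ℕ × ℕ)) (i j : ℕ) (I : OIdeal ↥S) : ℝ :=
  (∑ᶠ (q : ↥S), if (q : ℕ × ℕ).1 ≤ i ∧ (q : ℕ × ℕ).2 ≤ j then Tplus q I else 0)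
    + (∑ᶠ (q : ↥S), if i ≤ (q : ℕ × ℕ).1 ∧ j ≤ (q : ℕ × ℕ).2 then Tminus q I else 0)
    - (∑ᶠ (q : ↥S),
        if (q : ℕ × ℕ).1 < i ∧ (q : ℕ × ℕ).2 < j ∧ (q : ℕ × ℕ).1 < (q : ℕ × ℕ).2 then
          Tminus q I else 0)
    - (∑ᶠ (q : ↥S),
        if i < (q : ℕ × ℕ).1 ∧ j < (q : ℕ × ℕ).2 ∧ (q : ℕ × ℕ).1 < (q : ℕ × ℕ).2 then
          Tplus q I else 0)

/-- The shifted diagram of `λ` (of length `l`) has an outward corner indexed by `i'`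
(a north step followed by an east step on the southeast border, occurring at the lattice point
`(i', λ (i'+1) + i')`) if and only if `1 ≤ i' < l` and `λ i' ≥ λ (i'+1) + 2`. -/
def IsCorner (l : ℕ) (lam : ℕ → ℕ) (i' : ℕ) : Prop :=
  1 ≤ i' ∧ i' + 1 ≤ l ∧ lam (i' + 1) + 2 ≤ lam i'

/-- An order ideal `I ∈ J(P_λ^shift)` contains the outward corner indexed by `i'`
(i.e. the lattice path of `I` contains both steps of the corner):  equivalently, `I` contains
both the last box `[i'+1, λ(i'+1)+i']` of row `i'+1` and the box `[i', λ(i'+1)+i'+1]`. -/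
def ContainsCorner (l : ℕ) (lam : ℕ → ℕ) (I : OIdeal ↥(shiftCells l lam)) (i' : ℕ) : Prop :=
  (∃ q : ↥(shiftCells l lam), (q : ℕ × ℕ) = (i' + 1, lam (i' + 1) + i') ∧ q ∈ I.1) ∧
  (∃ q : ↥(shiftCells l lam), (q : ℕ × ℕ) = (i', lam (i' + 1) + i' + 1) ∧ q ∈ I.1)

/-- A (not necessarily strict) partition `ν` (with parts `ν 1 ≥ ν 2 ≥ ⋯`) which, viewed as a
straight shape, is balanced with height and width both equal to `k`:  it has exactly `k`
nonzero parts, its first part is `k`, and every outward corner of its boundary path (which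
occurs at the point `(i, ν (i+1))` whenever `ν i > ν (i+1)`) lies on the anti-diagonal
`i + j = k` of the `k × k` square. -/
def BalancedSquare (k : ℕ) (nu : ℕ → ℕ) : Prop :=
  (∀ i, 1 ≤ i → nu (i + 1) ≤ nu i) ∧
  (∀ i, 1 ≤ i → i ≤ k → 1 ≤ nu i) ∧
  (∀ i, k < i → nu i = 0) ∧
  nu 1 = k ∧
  (∀ i, 1 ≤ i → i + 1 ≤ k → nu (i + 1) < nu i → i + nu (i + 1) = k)

/-- The poset `P_{a,1,1,d}`: a bottom chain `w₁ < ⋯ < w_a`, two incomparable elements `x, y`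
covering `w_a`, and a top chain `z₁ < ⋯ < z_d` with `z₁` covering both `x` and `y`.
It is realized inside `ℕ × ℕ` (with the componentwise order) as
`w_i = (i,i)`, `x = (a+1, a)`, `y = (a, a+1)`, `z_j = (a+j, a+j)`. -/
def Pa11d (a d : ℕ) : Set (ℕ × ℕ) :=
  {p | (1 ≤ p.1 ∧ p.1 ≤ a ∧ p.2 = p.1) ∨ p = (a + 1, a) ∨ p = (a, a + 1) ∨
    (∃ j, 1 ≤ j ∧ j ≤ d ∧ p = (a + j, a + j))}

/-! ### Shifted set-valued tableaux

Letters of the primed alphabet `1 < 1' < 2 < 2' < ⋯` are encoded as natural numbers: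
the letter `m : ℕ` has value `m / 2 + 1` and is primed iff `m` is odd
(so `0 ↦ 1, 1 ↦ 1', 2 ↦ 2, 3 ↦ 2', …`); the order on letters is the usual order on `ℕ`. -/

/-- The value of a letter. -/
def letterVal (m : ℕ) : ℕ := m / 2 + 1

/-- `T` is a shifted set-valued tableau of shape given by the box set `S`:  each box gets a
finite nonempty set of letters, all entries of a box weakly precede all entries of any strictly
larger box, each unprimed letter appears at most once in each column, and each primed letter
appears at most once in each row. -/
def IsSSVT (S : Set (ℕ × ℕ)) (T : ↥S → Finset ℕ) : Prop :=
  (∀ u, (T u).Nonempty) ∧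
  (∀ u v : ↥S, u < v → ∀ x ∈ T u, ∀ y ∈ T v, x ≤ y) ∧
  (∀ u v : ↥S, u ≠ v → (u : ℕ × ℕ).2 = (v : ℕ × ℕ).2 →
    ∀ m : ℕ, m % 2 = 0 → ¬(m ∈ T u ∧ m ∈ T v)) ∧
  (∀ u v : ↥S, u ≠ v → (u : ℕ × ℕ).1 = (v : ℕ × ℕ).1 →
    ∀ m : ℕ, m % 2 = 1 → ¬(m ∈ T u ∧ m ∈ T v))

/-- `T` is standard: distinct entry occurrences have distinct values, and the values used are
exactly `1, 2, …, N` where `N` is the total number of entries. -/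
def IsStandardT (S : Set (ℕ × ℕ)) (T : ↥S → Finset ℕ) : Prop :=
  (∀ u v : ↥S, ∀ x ∈ T u, ∀ y ∈ T v, letterVal x = letterVal y → u = v ∧ x = y) ∧
  (∀ m : ℕ, 1 ≤ m → m ≤ ∑ᶠ (u : ↥S), (T u).card → ∃ u : ↥S, ∃ x ∈ T u, letterVal x = m)

/-- `T` is barely set-valued: exactly one box has two entries; all other boxes have one. -/
def IsBarelySetValued (S : Set (ℕ × ℕ)) (T : ↥S → Finset ℕ) : Prop :=
  ∃ u₀ : ↥S, (T u₀).card = 2 ∧ ∀ u : ↥S, u ≠ u₀ → (T u).card = 1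

/-- `T` is unprimed: no primed letters appear. -/
def IsUnprimed (S : Set (ℕ × ℕ)) (T : ↥S → Finset ℕ) : Prop :=
  ∀ u : ↥S, ∀ x ∈ T u, x % 2 = 0

/-- `g^λ`: the number of unprimed standard shifted tableaux of shape `λ`. -/
def gShift (l : ℕ) (lam : ℕ → ℕ) : ℕ :=
  Nat.card {T : ↥(shiftCells l lam) → Finset ℕ //
    IsSSVT (shiftCells l lam) T ∧ IsStandardT (shiftCells l lam) T ∧
    (∀ u, (T u).card = 1) ∧ IsUnprimed (shiftCells l lam) T}

/-- The number of standard shifted barely set-valued tableaux of shape `λ`. -/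
def numBarelySVT (l : ℕ) (lam : ℕ → ℕ) : ℕ :=
  Nat.card {T : ↥(shiftCells l lam) → Finset ℕ //
    IsSSVT (shiftCells l lam) T ∧ IsStandardT (shiftCells l lam) T ∧
    IsBarelySetValued (shiftCells l lam) T}

/-! ### Toggles, rowmotion, orbits -/

/-- The toggle `τ_p` on order ideals. -/
def toggle {α : Type*} [PartialOrder α] (p : α) (I : OIdeal α) : OIdeal α :=
  if h : p ∉ I.1 ∧ IsLowerSet (I.1 ∪ {p}) then ⟨I.1 ∪ {p}, h.2⟩
  else if h' : p ∈ I.1 ∧ IsLowerSet (I.1 \ {p}) then ⟨I.1 \ {p}, h'.2⟩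
  else I

/-- The composition of the toggles along a list, applied head first. -/
def applyToggles {α : Type*} [PartialOrder α] (L : List α) (I : OIdeal α) : OIdeal α :=
  L.foldl (fun J p => toggle p J) I

/-- The forward orbit of `x` under `Φ` (for invertible `Φ` on a finite set, the orbit). -/
def orbit {β : Type*} (Φ : β → β) (x : β) : Set β := {y | ∃ n : ℕ, Φ^[n] x = y}

/-- The probability distribution that is uniform on the orbit of `x` under `Φ` and zero
outside of it. -/
def orbitDist {β : Type*} (Φ : β → β) (x : β) : β → ℝ := fun y =>
  if y ∈ orbit Φ x then (Nat.card ↥(orbit Φ x) : ℝ)⁻¹ else 0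

/-- Rowmotion on order ideals: `I ↦ {x : x ≤ y for some minimal element y of P \ I}`. -/
def rowmotion {α : Type*} [PartialOrder α] (I : OIdeal α) : OIdeal α :=
  ⟨{x | ∃ y, (y ∉ I.1 ∧ ∀ z, z ∉ I.1 → z ≤ y → z = y) ∧ x ≤ y}, by
    intro a b hba ha
    obtain ⟨y, hy, hay⟩ := ha
    exact ⟨y, hy, le_trans hba hay⟩⟩

/-- The antichain cardinality statistic `I ↦ #max(I)`. -/
def antichainCard {α : Type*} [PartialOrder α] (I : OIdeal α) : ℝ :=
  (Nat.card {p : α // p ∈ I.1 ∧ ∀ q, q ∈ I.1 → p ≤ q → p = q} : ℝ)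

end CDEPaper

namespace CDEPaper

namespace Aux

open Finset

/-! ### Fin counting helpers -/

lemma card_filter_lt_fin (n m : ℕ) (hm : m ≤ n) :
    (Finset.univ.filter fun i : Fin n => i.val < m).card = m := by
  rw [← Finset.card_range m]
  refine Finset.card_bij' (fun i _ => i.val)
    (fun j hj => ⟨j, lt_of_lt_of_le (Finset.mem_range.mp hj) hm⟩) ?_ ?_ ?_ ?_
  · intro i hi; simpa using (Finset.mem_filter.mp hi).2
  · intro j hj; simp [Finset.mem_range.mp hj]
  · intro i hi; rfl
  · intro j hj; rfl

lemma card_filter_interval_fin (n a b : ℕ) (hab : a ≤ b) (hb : b ≤ n) :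
    (Finset.univ.filter fun i : Fin n => a ≤ i.val ∧ i.val < b).card = b - a := by
  rw [← Finset.card_range (b - a)]
  refine Finset.card_bij' (fun i _ => i.val - a)
    (fun j hj => (⟨a + j, by have := Finset.mem_range.mp hj; omega⟩ : Fin n)) ?_ ?_ ?_ ?_
  · intro i hi
    have := (Finset.mem_filter.mp hi).2
    simp only [Finset.mem_range]; omega
  · intro j hj
    have := Finset.mem_range.mp hj
    simp only [Finset.mem_filter, Finset.mem_univ, true_and]; omega
  · intro i hi
    have := (Finset.mem_filter.mp hi).2
    ext; simp; omega
  · intro j hj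
    have := Finset.mem_range.mp hj; simp

lemma upward_char {n : ℕ} {P : Fin n → Prop} (hP : ∀ i j : Fin n, i ≤ j → P i → P j)
    (i : Fin n) : ¬ P i ↔ i.val < (Finset.univ.filter fun j => ¬ P j).card := by
  constructor
  · intro h
    have hsub : (Finset.univ.filter fun j : Fin n => j.val < i.val + 1) ⊆
        (Finset.univ.filter fun j => ¬ P j) := by
      intro j hj
      have hj' := (Finset.mem_filter.mp hj).2
      refine Finset.mem_filter.mpr ⟨Finset.mem_univ _, fun hPj => h ?_⟩
      exact hP j i (by omega) hPj
    have := Finset.card_le_card hsub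
    rwa [card_filter_lt_fin n (i.val + 1) (by omega)] at this
  · intro h hPi
    have hsub : (Finset.univ.filter fun j : Fin n => ¬ P j) ⊆
        (Finset.univ.filter fun j : Fin n => j.val < i.val) := by
      intro j hj
      have hj' := (Finset.mem_filter.mp hj).2
      refine Finset.mem_filter.mpr ⟨Finset.mem_univ _, ?_⟩
      by_contra hlt
      exact hj' (hP i j (by omega) hPi)
    have h2 := Finset.card_le_card hsub
    rw [card_filter_lt_fin n i.val (by omega)] at h2
    omega

lemma card_filter_of_iff {n m : ℕ} (hm : m ≤ n) {Q : Fin n → Prop}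
    (h : ∀ i : Fin n, Q i ↔ m ≤ i.val) :
    (Finset.univ.filter fun i => ¬ Q i).card = m := by
  have : (Finset.univ.filter fun i : Fin n => ¬ Q i) =
      (Finset.univ.filter fun i : Fin n => i.val < m) := by
    apply Finset.filter_congr
    intro i _
    simp only [eq_iff_iff, h i]; omega
  rw [this, card_filter_lt_fin n m hm]

/-! ### lower set helpers -/

variable {α : Type*} [PartialOrder α]

lemma lower_union_iff (p : α) (I : OIdeal α) :
    IsLowerSet (I.1 ∪ {p}) ↔ ∀ q, q < p → q ∈ I.1 := by
  constructor
  · intro h q hq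
    have : q ∈ I.1 ∪ {p} := h hq.le (by simp)
    rcases this with h' | h'
    · exact h'
    · exact absurd h' (by simpa using hq.ne)
  · intro h
    intro x y hyx hx
    rcases hx with hx | hx
    · exact Or.inl (I.2 hyx hx)
    · simp only [Set.mem_singleton_iff] at hx
      subst hx
      rcases eq_or_lt_of_le hyx with h' | h'
      · exact Or.inr (by simp [h'])
      · exact Or.inl (h y h')

lemma lower_diff_iff (p : α) (I : OIdeal α) :
    IsLowerSet (I.1 \ {p}) ↔ ∀ q, p < q → q ∉ I.1 := by
  constructor
  · intro h q hq hqI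
    have : p ∈ I.1 \ {p} := h hq.le ⟨hqI, by simpa using hq.ne'⟩
    exact this.2 rfl
  · intro h x y hyx hx
    refine ⟨I.2 hyx hx.1, ?_⟩
    intro hy
    simp only [Set.mem_singleton_iff] at hy
    subst hy
    rcases eq_or_lt_of_le hyx with h' | h'
    · exact hx.2 (by simp [← h'])
    · exact h x h' hx.1

/-- toggle `p` in (total function). -/
def addp (p : α) (I : OIdeal α) : OIdeal α :=
  if h : IsLowerSet (I.1 ∪ {p}) then ⟨I.1 ∪ {p}, h⟩ else I

def subp (p : α) (I : OIdeal α) : OIdeal α :=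
  if h : IsLowerSet (I.1 \ {p}) then ⟨I.1 \ {p}, h⟩ else I

lemma addp_spec {p : α} {I : OIdeal α} (h : IsLowerSet (I.1 ∪ {p})) :
    (addp p I).1 = insert p I.1 := by
  have h2 : addp p I = ⟨I.1 ∪ {p}, h⟩ := dif_pos h
  rw [h2, ← Set.union_singleton]

lemma subp_spec {p : α} {I : OIdeal α} (h : IsLowerSet (I.1 \ {p})) :
    (subp p I).1 = I.1 \ {p} := by
  have h2 : subp p I = ⟨I.1 \ {p}, h⟩ := dif_pos h
  rw [h2]


/-! ### chain parameters -/

variable {α : Type*} [PartialOrder α]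

variable (p : α) {k : ℕ}

def bN (c : Fin (k+1) → OIdeal α) : ℕ :=
  (Finset.univ.filter fun i => p ∉ (c i).1).card

def aN (c : Fin (k+1) → OIdeal α) : ℕ :=
  (Finset.univ.filter fun i => ¬ ∀ q, q < p → q ∈ (c i).1).card

def dN (c : Fin (k+1) → OIdeal α) : ℕ :=
  (Finset.univ.filter fun i => ¬ ∃ q, p < q ∧ q ∈ (c i).1).card

variable {c : Fin (k+1) → OIdeal α}

lemma coe_mono (hc : StrictMono c) {i j : Fin (k+1)} (hij : i ≤ j) : (c i).1 ⊆ (c j).1 :=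
  hc.monotone hij

lemma mem_p_iff (hc : StrictMono c) (i : Fin (k+1)) :
    p ∈ (c i).1 ↔ bN p c ≤ i.val := by
  have h := upward_char (P := fun i => p ∈ (c i).1)
    (fun i j hij hp => coe_mono hc hij hp) i
  have h2 := not_iff_not.mpr h
  simpa [not_lt, not_not, bN] using h2

lemma low_iff (hc : StrictMono c) (i : Fin (k+1)) :
    (∀ q, q < p → q ∈ (c i).1) ↔ aN p c ≤ i.val := by
  have h := upward_char (P := fun i => ∀ q, q < p → q ∈ (c i).1)
    (fun i j hij hp q hq => coe_mono hc hij (hp q hq)) i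
  have h2 := not_iff_not.mpr h
  simpa [not_lt, not_not, aN] using h2

lemma high_iff (hc : StrictMono c) (i : Fin (k+1)) :
    (∃ q, p < q ∧ q ∈ (c i).1) ↔ dN p c ≤ i.val := by
  have h := upward_char (P := fun i => ∃ q, p < q ∧ q ∈ (c i).1)
    (fun i j hij ⟨q, hq, hqm⟩ => ⟨q, hq, coe_mono hc hij hqm⟩) i
  have h2 := not_iff_not.mpr h
  simpa [not_lt, not_not, dN] using h2

lemma bN_eq {m : ℕ} (hm : m ≤ k + 1) (h : ∀ i : Fin (k+1), p ∈ (c i).1 ↔ m ≤ i.val) :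
    bN p c = m :=
  card_filter_of_iff hm h

lemma aN_eq {m : ℕ} (hm : m ≤ k + 1) (h : ∀ i : Fin (k+1), (∀ q, q < p → q ∈ (c i).1) ↔ m ≤ i.val) :
    aN p c = m :=
  card_filter_of_iff hm h

lemma dN_eq {m : ℕ} (hm : m ≤ k + 1) (h : ∀ i : Fin (k+1), (∃ q, p < q ∧ q ∈ (c i).1) ↔ m ≤ i.val) :
    dN p c = m :=
  card_filter_of_iff hm h

lemma bN_le (c : Fin (k+1) → OIdeal α) : bN p c ≤ k + 1 := by
  have := Finset.card_filter_le (Finset.univ : Finset (Fin (k+1))) (fun i => p ∉ (c i).1)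
  simpa [bN] using this

lemma aN_le (c : Fin (k+1) → OIdeal α) : aN p c ≤ k + 1 := by
  have := Finset.card_filter_le (Finset.univ : Finset (Fin (k+1)))
    (fun i => ¬ ∀ q, q < p → q ∈ (c i).1)
  simpa [aN] using this

lemma dN_le (c : Fin (k+1) → OIdeal α) : dN p c ≤ k + 1 := by
  have := Finset.card_filter_le (Finset.univ : Finset (Fin (k+1)))
    (fun i => ¬ ∃ q, p < q ∧ q ∈ (c i).1)
  simpa [dN] using this

lemma aN_le_bN (hc : StrictMono c) : aN p c ≤ bN p c := by
  by_contra h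
  push_neg at h
  have hb : bN p c < k + 1 := lt_of_lt_of_le h (aN_le p c)
  set i : Fin (k+1) := ⟨bN p c, hb⟩ with hi
  have hp : p ∈ (c i).1 := (mem_p_iff p hc i).mpr (le_refl _)
  have hlow : ∀ q, q < p → q ∈ (c i).1 := fun q hq => (c i).2 hq.le hp
  have := (low_iff p hc i).mp hlow
  simp only [hi] at this
  omega

lemma bN_le_dN (hc : StrictMono c) : bN p c ≤ dN p c := by
  by_contra h
  push_neg at h
  have hd : dN p c < k + 1 := lt_of_lt_of_le h (bN_le p c)
  set i : Fin (k+1) := ⟨dN p c, hd⟩ with hi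
  obtain ⟨q, hq, hqm⟩ : ∃ q, p < q ∧ q ∈ (c i).1 := (high_iff p hc i).mpr (le_refl _)
  have hp : p ∈ (c i).1 := (c i).2 hq.le hqm
  have := (mem_p_iff p hc i).mp hp
  simp only [hi] at this
  omega

lemma inMarks_card (hc : StrictMono c) :
    (Finset.univ.filter fun i => p ∉ (c i).1 ∧ IsLowerSet ((c i).1 ∪ {p})).card
      = bN p c - aN p c := by
  have heq : (Finset.univ.filter fun i => p ∉ (c i).1 ∧ IsLowerSet ((c i).1 ∪ {p}))
      = (Finset.univ.filter fun i : Fin (k+1) => aN p c ≤ i.val ∧ i.val < bN p c) := by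
    apply Finset.filter_congr
    intro i _
    rw [lower_union_iff p (c i), low_iff p hc i]
    have h1 := mem_p_iff p hc i
    constructor
    · rintro ⟨hnp, ha⟩
      refine ⟨ha, ?_⟩
      by_contra hlt
      exact hnp (h1.mpr (by omega))
    · rintro ⟨ha, hlt⟩
      exact ⟨fun hp => by have := h1.mp hp; omega, ha⟩
  rw [heq, card_filter_interval_fin _ _ _ (aN_le_bN p hc) (bN_le p c)]

lemma outMarks_card (hc : StrictMono c) :
    (Finset.univ.filter fun i => p ∈ (c i).1 ∧ IsLowerSet ((c i).1 \ {p})).card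
      = dN p c - bN p c := by
  have heq : (Finset.univ.filter fun i => p ∈ (c i).1 ∧ IsLowerSet ((c i).1 \ {p}))
      = (Finset.univ.filter fun i : Fin (k+1) => bN p c ≤ i.val ∧ i.val < dN p c) := by
    apply Finset.filter_congr
    intro i _
    rw [lower_diff_iff p (c i), mem_p_iff p hc i]
    have h1 := high_iff p hc i
    constructor
    · rintro ⟨hb, hnq⟩
      refine ⟨hb, ?_⟩
      by_contra hlt
      obtain ⟨q, hq, hqm⟩ := h1.mpr (by omega)
      exact hnq q hq hqm
    · rintro ⟨hb, hlt⟩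
      refine ⟨hb, fun q hq hqm => ?_⟩
      have := h1.mp ⟨q, hq, hqm⟩
      omega
  rw [heq, card_filter_interval_fin _ _ _ (bN_le_dN p hc) (dN_le p c)]

/-- The chain is "tight" at the entry point of `p`. -/
def Tight (c : Fin (k+1) → OIdeal α) : Prop :=
  ∃ (h1 : 1 ≤ bN p c) (h2 : bN p c ≤ k),
    (c ⟨bN p c, by omega⟩).1 = insert p (c ⟨bN p c - 1, by omega⟩).1

lemma tight_aN (hc : StrictMono c) (ht : Tight p c) : aN p c + 1 ≤ bN p c := by
  obtain ⟨h1, h2, heq⟩ := ht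
  have hlow : ∀ q, q < p → q ∈ (c ⟨bN p c - 1, by omega⟩).1 := by
    intro q hq
    have hp : p ∈ (c ⟨bN p c, by omega⟩).1 := (mem_p_iff p hc _).mpr (by simp)
    have hq2 : q ∈ (c ⟨bN p c, by omega⟩).1 := (c _).2 hq.le hp
    rw [heq] at hq2
    rcases hq2 with h | h
    · exact absurd h hq.ne
    · exact h
  have := (low_iff p hc _).mp hlow
  simp only at this
  omega

lemma tight_dN (hc : StrictMono c) (ht : Tight p c) : bN p c + 1 ≤ dN p c := by
  obtain ⟨h1, h2, heq⟩ := ht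
  have hnq : ¬ ∃ q, p < q ∧ q ∈ (c ⟨bN p c, by omega⟩).1 := by
    rintro ⟨q, hq, hqm⟩
    rw [heq] at hqm
    rcases hqm with h | h
    · exact absurd h hq.ne'
    · have hp : p ∈ (c ⟨bN p c - 1, by omega⟩).1 := (c _).2 hq.le h
      have := (mem_p_iff p hc _).mp hp
      simp only at this
      omega
  have h3 : ¬ (dN p c ≤ bN p c) := fun hle => hnq ((high_iff p hc _).mpr (by simpa using hle))
  omega


/-! ### order helpers on OIdeal -/

lemma oi_le {I J : OIdeal α} (hsub : I.1 ⊆ J.1) : I ≤ J := hsub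

lemma oi_lt {I J : OIdeal α} (hsub : I.1 ⊆ J.1) {x : α} (hx : x ∈ J.1) (hnx : x ∉ I.1) :
    I < J := by
  refine lt_of_le_of_ne (oi_le hsub) ?_
  intro h
  rw [h] at hnx
  exact hnx hx

lemma oi_lt_elim {I J : OIdeal α} (h : I < J) :
    I.1 ⊆ J.1 ∧ ∃ x, x ∈ J.1 ∧ x ∉ I.1 := by
  have hsub : I.1 ⊆ J.1 := le_of_lt h
  refine ⟨hsub, ?_⟩
  have hne : I.1 ≠ J.1 := fun he => (ne_of_lt h) (Subtype.ext he)
  obtain ⟨x, hx, hnx⟩ := Set.exists_of_ssubset (ssubset_of_subset_of_ne hsub hne)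
  exact ⟨x, hx, hnx⟩

lemma strictMono_adj {k : ℕ} {f : Fin (k+1) → OIdeal α}
    (h : ∀ i j : Fin (k+1), i.val + 1 = j.val → f i < f j) : StrictMono f := by
  have key : ∀ m : ℕ, ∀ i j : Fin (k+1), i.val + m + 1 = j.val → f i < f j := by
    intro m
    induction m with
    | zero => exact fun i j hj => h i j (by omega)
    | succ m ih =>
      intro i j hj
      have hmid : i.val + m + 1 < k + 1 := by have := j.isLt; omega
      exact lt_trans (ih i ⟨i.val + m + 1, hmid⟩ (by simp)) (h _ j (by simp; omega))
  intro i j hij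
  have : i.val < j.val := hij
  exact key (j.val - i.val - 1) i j (by omega)

/-! ### the maps -/

section maps

variable (t : ℕ)

def Fmap (c : Fin (k+1) → OIdeal α) : Fin (k+1) → OIdeal α :=
  if Tight p c then
    fun i => if bN p c - t + 1 ≤ i.val ∧ i.val ≤ bN p c then
      addp p (c ⟨i.val - 1, lt_of_le_of_lt (Nat.sub_le _ _) i.isLt⟩) else c i
  else
    fun i => if bN p c - t ≤ i.val ∧ i.val < bN p c then addp p (c i) else c i

def Gmap (c : Fin (k+1) → OIdeal α) : Fin (k+1) → OIdeal α :=
  if Tight p c then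
    fun i => if bN p c - 1 ≤ i.val ∧ i.val + 2 ≤ bN p c + t then
      subp p (c ⟨min (i.val + 1) k, Nat.lt_succ_of_le (min_le_right _ _)⟩) else c i
  else
    fun i => if bN p c ≤ i.val ∧ i.val < bN p c + t then subp p (c i) else c i


lemma sssub {s u : Set α} (hsub : s ⊆ u) {x : α} (hx : x ∈ u) (hnx : x ∉ s) : s ⊂ u :=
  ssubset_of_subset_of_ne hsub (fun he => hnx (he ▸ hx))

lemma oi_lt_iff {I J : OIdeal α} : I < J ↔ I.1 ⊂ J.1 := by
  rw [← Subtype.coe_lt_coe, Set.lt_iff_ssubset]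

variable {t : ℕ}

section NTF

variable (hc : StrictMono c) (ht : 1 ≤ t) (ha : aN p c + t ≤ bN p c) (hnt : ¬ Tight p c)
include hc ht ha hnt

lemma Fmap_nt_apply (i : Fin (k+1)) :
    (Fmap p t c i).1 =
      if bN p c - t ≤ i.val ∧ i.val < bN p c then insert p (c i).1 else (c i).1 := by
  rw [Fmap, if_neg hnt]
  by_cases hw : bN p c - t ≤ i.val ∧ i.val < bN p c
  · rw [if_pos hw, if_pos hw]
    exact addp_spec ((lower_union_iff p (c i)).mpr
      (fun q hq => ((low_iff p hc i).mpr (by omega)) q hq))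
  · rw [if_neg hw, if_neg hw]

lemma Fmap_nt_bN : bN p (Fmap p t c) = bN p c - t := by
  apply bN_eq p (by have := bN_le p c; omega)
  intro i
  rw [Fmap_nt_apply p hc ht ha hnt i]
  by_cases hw : bN p c - t ≤ i.val ∧ i.val < bN p c
  · rw [if_pos hw]
    exact ⟨fun _ => by omega, fun _ => Set.mem_insert _ _⟩
  · rw [if_neg hw, mem_p_iff p hc i]
    omega

lemma Fmap_nt_aN : aN p (Fmap p t c) = aN p c := by
  apply aN_eq p (aN_le p c)
  intro i
  by_cases hw : bN p c - t ≤ i.val ∧ i.val < bN p c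
  · constructor
    · intro _; omega
    · intro _ q hq
      rw [Fmap_nt_apply p hc ht ha hnt i, if_pos hw]
      exact Set.mem_insert_of_mem _ (((low_iff p hc i).mpr (by omega)) q hq)
  · rw [show (∀ q, q < p → q ∈ (Fmap p t c i).1) ↔ (∀ q, q < p → q ∈ (c i).1) by
      rw [Fmap_nt_apply p hc ht ha hnt i, if_neg hw]]
    exact low_iff p hc i

lemma Fmap_nt_dN : dN p (Fmap p t c) = dN p c := by
  apply dN_eq p (dN_le p c)
  intro i
  rw [show (∃ q, p < q ∧ q ∈ (Fmap p t c i).1) ↔ (∃ q, p < q ∧ q ∈ (c i).1) from ?_,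
    high_iff p hc i]
  rw [Fmap_nt_apply p hc ht ha hnt i]
  by_cases hw : bN p c - t ≤ i.val ∧ i.val < bN p c
  · rw [if_pos hw]
    constructor
    · rintro ⟨q, hq, (rfl | hm)⟩
      · exact absurd hq (lt_irrefl _)
      · exact ⟨q, hq, hm⟩
    · rintro ⟨q, hq, hm⟩
      exact ⟨q, hq, Set.mem_insert_of_mem _ hm⟩
  · rw [if_neg hw]

lemma Fmap_nt_sm : StrictMono (Fmap p t c) := by
  apply strictMono_adj
  intro i j hij
  rw [oi_lt_iff, Fmap_nt_apply p hc ht ha hnt i, Fmap_nt_apply p hc ht ha hnt j]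
  have hjlt := j.isLt
  by_cases hwi : bN p c - t ≤ i.val ∧ i.val < bN p c
  · by_cases hwj : bN p c - t ≤ j.val ∧ j.val < bN p c
    · rw [if_pos hwi, if_pos hwj]
      obtain ⟨hsub, x, hx, hnx⟩ := oi_lt_elim (hc (show i < j by omega))
      have hxp : x ≠ p := fun he => absurd ((mem_p_iff p hc j).mp (he ▸ hx)) (by omega)
      refine sssub (Set.insert_subset_insert hsub) (x := x) (Set.mem_insert_of_mem _ hx) ?_
      rintro (h | h)
      · exact hxp h
      · exact hnx h
    · -- i = bN - 1, j = bN
      rw [if_pos hwi, if_neg hwj]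
      have hjb : j.val = bN p c := by omega
      have hpj : p ∈ (c j).1 := (mem_p_iff p hc j).mpr (by omega)
      have hsub : insert p (c i).1 ⊆ (c j).1 := by
        rw [Set.insert_subset_iff]
        exact ⟨hpj, oi_lt_elim (hc (show i < j by omega))|>.1⟩
      refine ssubset_of_subset_of_ne hsub ?_
      intro he
      apply hnt
      refine ⟨by omega, by omega, ?_⟩
      have hi' : (⟨bN p c, by omega⟩ : Fin (k+1)) = j := by
        apply Fin.ext; simp [hjb]
      have hi0 : (⟨bN p c - 1, by omega⟩ : Fin (k+1)) = i := by
        apply Fin.ext; simp; omega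
      rw [hi', hi0, ← he]
  · by_cases hwj : bN p c - t ≤ j.val ∧ j.val < bN p c
    · -- j = bN - t
      rw [if_neg hwi, if_pos hwj]
      have hsub : (c i).1 ⊆ insert p (c j).1 :=
        subset_trans (oi_lt_elim (hc (show i < j by omega))).1 (Set.subset_insert _ _)
      have hpi : p ∉ (c i).1 := by
        rw [mem_p_iff p hc i]; omega
      exact sssub hsub (Set.mem_insert _ _) hpi
    · rw [if_neg hwi, if_neg hwj]
      exact oi_lt_iff.mp (hc (show i < j by omega))

lemma Fmap_nt_ntight : ¬ Tight p (Fmap p t c) := by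
  rintro ⟨h1, h2, heq⟩
  have hb' : bN p (Fmap p t c) = bN p c - t := Fmap_nt_bN p hc ht ha hnt
  set i1 : Fin (k+1) := ⟨bN p (Fmap p t c), by omega⟩ with hi1
  set i0 : Fin (k+1) := ⟨bN p (Fmap p t c) - 1, by omega⟩ with hi0
  have hv1 : i1.val = bN p c - t := by simp [hi1, hb']
  have hv0 : i0.val = bN p c - t - 1 := by simp [hi0, hb']
  have h1' : 1 ≤ bN p c - t := by omega
  have he1 : (Fmap p t c i1).1 = insert p (c i1).1 := by
    rw [Fmap_nt_apply p hc ht ha hnt i1, if_pos (by omega)]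
  have he0 : (Fmap p t c i0).1 = (c i0).1 := by
    rw [Fmap_nt_apply p hc ht ha hnt i0, if_neg (by omega)]
  rw [he1, he0] at heq
  obtain ⟨hsub, x, hx, hnx⟩ := oi_lt_elim (hc (show i0 < i1 by
    rw [Fin.lt_def]; omega))
  have hxp : x ≠ p := fun he => absurd ((mem_p_iff p hc i1).mp (he ▸ hx)) (by omega)
  have : x ∈ insert p (c i0).1 := by
    rw [← heq]; exact Set.mem_insert_of_mem _ hx
  rcases this with h | h
  · exact hxp h
  · exact hnx h

lemma Fmap_nt_gf : Gmap p t (Fmap p t c) = c := by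
  funext i
  rw [Gmap, if_neg (Fmap_nt_ntight p hc ht ha hnt)]
  have hb' : bN p (Fmap p t c) = bN p c - t := Fmap_nt_bN p hc ht ha hnt
  by_cases hw : bN p c - t ≤ i.val ∧ i.val < bN p c
  · rw [if_pos (by omega : bN p (Fmap p t c) ≤ i.val ∧ i.val < bN p (Fmap p t c) + t)]
    have hset : (Fmap p t c i).1 = insert p (c i).1 := by
      rw [Fmap_nt_apply p hc ht ha hnt i, if_pos hw]
    have hpi : p ∉ (c i).1 := by rw [mem_p_iff p hc i]; omega
    have hdiff : (Fmap p t c i).1 \ {p} = (c i).1 := by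
      rw [hset, Set.insert_diff_self_of_notMem hpi]
    apply Subtype.ext
    rw [subp_spec (by rw [hdiff]; exact (c i).2), hdiff]
  · rw [if_neg (by omega : ¬ (bN p (Fmap p t c) ≤ i.val ∧ i.val < bN p (Fmap p t c) + t))]
    apply Subtype.ext
    rw [Fmap_nt_apply p hc ht ha hnt i, if_neg hw]

end NTF

section TF

variable (hc : StrictMono c) (ht : 1 ≤ t) (ha : aN p c + t ≤ bN p c) (htt : Tight p c)
include hc ht ha htt

lemma Fmap_t_apply (i : Fin (k+1)) :
    (Fmap p t c i).1 =
      if bN p c - t + 1 ≤ i.val ∧ i.val ≤ bN p c then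
        insert p (c ⟨i.val - 1, lt_of_le_of_lt (Nat.sub_le _ _) i.isLt⟩).1
      else (c i).1 := by
  rw [Fmap, if_pos htt]
  by_cases hw : bN p c - t + 1 ≤ i.val ∧ i.val ≤ bN p c
  · rw [if_pos hw, if_pos hw]
    exact addp_spec ((lower_union_iff p _).mpr
      (fun q hq => ((low_iff p hc _).mpr (by simp; omega)) q hq))
  · rw [if_neg hw, if_neg hw]

lemma Fmap_t_bN : bN p (Fmap p t c) = bN p c - t + 1 := by
  obtain ⟨hb1, hb2, _⟩ := id htt
  apply bN_eq p (by omega)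
  intro i
  rw [Fmap_t_apply p hc ht ha htt i]
  by_cases hw : bN p c - t + 1 ≤ i.val ∧ i.val ≤ bN p c
  · rw [if_pos hw]
    exact ⟨fun _ => by omega, fun _ => Set.mem_insert _ _⟩
  · rw [if_neg hw, mem_p_iff p hc i]
    omega

lemma Fmap_t_aN : aN p (Fmap p t c) = aN p c := by
  apply aN_eq p (aN_le p c)
  intro i
  by_cases hw : bN p c - t + 1 ≤ i.val ∧ i.val ≤ bN p c
  · constructor
    · intro _; omega
    · intro _ q hq
      rw [Fmap_t_apply p hc ht ha htt i, if_pos hw]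
      exact Set.mem_insert_of_mem _ (((low_iff p hc _).mpr (by simp; omega)) q hq)
  · rw [show (∀ q, q < p → q ∈ (Fmap p t c i).1) ↔ (∀ q, q < p → q ∈ (c i).1) by
      rw [Fmap_t_apply p hc ht ha htt i, if_neg hw]]
    exact low_iff p hc i

lemma Fmap_t_dN : dN p (Fmap p t c) = dN p c := by
  have hd := tight_dN p hc htt
  apply dN_eq p (dN_le p c)
  intro i
  by_cases hw : bN p c - t + 1 ≤ i.val ∧ i.val ≤ bN p c
  · rw [show (∃ q, p < q ∧ q ∈ (Fmap p t c i).1) ↔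
        (∃ q, p < q ∧ q ∈ (c ⟨i.val - 1, lt_of_le_of_lt (Nat.sub_le _ _) i.isLt⟩).1) from ?_]
    · rw [high_iff p hc _]
      simp only
      omega
    · rw [Fmap_t_apply p hc ht ha htt i, if_pos hw]
      constructor
      · rintro ⟨q, hq, (rfl | hm)⟩
        · exact absurd hq (lt_irrefl _)
        · exact ⟨q, hq, hm⟩
      · rintro ⟨q, hq, hm⟩
        exact ⟨q, hq, Set.mem_insert_of_mem _ hm⟩
  · rw [show (∃ q, p < q ∧ q ∈ (Fmap p t c i).1) ↔ (∃ q, p < q ∧ q ∈ (c i).1) by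
      rw [Fmap_t_apply p hc ht ha htt i, if_neg hw]]
    exact high_iff p hc i

lemma tight_eqv (i j : Fin (k+1)) (hi : i.val = bN p c) (hj : j.val = bN p c - 1) :
    (c i).1 = insert p (c j).1 := by
  obtain ⟨hb1, hb2, heq⟩ := id htt
  obtain ⟨iv, hlti⟩ := i
  obtain ⟨jv, hltj⟩ := j
  simp only at hi hj
  subst hi; subst hj
  exact heq

lemma Fmap_t_sm : StrictMono (Fmap p t c) := by
  obtain ⟨hb1, hb2, heq⟩ := id htt
  apply strictMono_adj
  intro i j hij
  rw [oi_lt_iff, Fmap_t_apply p hc ht ha htt i, Fmap_t_apply p hc ht ha htt j]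
  have hjlt := j.isLt
  by_cases hwi : bN p c - t + 1 ≤ i.val ∧ i.val ≤ bN p c
  · by_cases hwj : bN p c - t + 1 ≤ j.val ∧ j.val ≤ bN p c
    · rw [if_pos hwi, if_pos hwj]
      have hlt : (⟨i.val - 1, lt_of_le_of_lt (Nat.sub_le _ _) i.isLt⟩ : Fin (k+1))
          < ⟨j.val - 1, lt_of_le_of_lt (Nat.sub_le _ _) j.isLt⟩ := by
        rw [Fin.lt_def]; simp; omega
      obtain ⟨hsub, x, hx, hnx⟩ := oi_lt_elim (hc hlt)
      have hxp : x ≠ p := fun he => absurd ((mem_p_iff p hc _).mp (he ▸ hx)) (by simp; omega)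
      refine sssub (Set.insert_subset_insert hsub) (x := x) (Set.mem_insert_of_mem _ hx) ?_
      rintro (h | h)
      · exact hxp h
      · exact hnx h
    · -- i = bN, j = bN + 1
      rw [if_pos hwi, if_neg hwj]
      have hib : i.val = bN p c := by omega
      rw [← tight_eqv p hc ht ha htt i ⟨i.val - 1, lt_of_le_of_lt (Nat.sub_le _ _) i.isLt⟩
        hib (by simp [hib])]
      exact oi_lt_iff.mp (hc (show i < j by rw [Fin.lt_def]; omega))
  · by_cases hwj : bN p c - t + 1 ≤ j.val ∧ j.val ≤ bN p c
    · -- i = bN - t, j = bN - t + 1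
      rw [if_neg hwi, if_pos hwj]
      have hjeq : (⟨j.val - 1, lt_of_le_of_lt (Nat.sub_le _ _) j.isLt⟩ : Fin (k+1)) = i := by
        apply Fin.ext; simp; omega
      rw [hjeq]
      have hpi : p ∉ (c i).1 := by rw [mem_p_iff p hc i]; omega
      exact sssub (Set.subset_insert _ _) (Set.mem_insert _ _) hpi
    · rw [if_neg hwi, if_neg hwj]
      exact oi_lt_iff.mp (hc (show i < j by rw [Fin.lt_def]; omega))

lemma Fmap_t_tight : Tight p (Fmap p t c) := by
  obtain ⟨hb1, hb2, heq⟩ := id htt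
  have hb' : bN p (Fmap p t c) = bN p c - t + 1 := Fmap_t_bN p hc ht ha htt
  refine ⟨by omega, by omega, ?_⟩
  set i1 : Fin (k+1) := ⟨bN p (Fmap p t c), by omega⟩ with hi1
  set i0 : Fin (k+1) := ⟨bN p (Fmap p t c) - 1, by omega⟩ with hi0
  have hv1 : i1.val = bN p c - t + 1 := by simp [hi1, hb']
  have hv0 : i0.val = bN p c - t := by simp [hi0, hb']
  have he1 : (Fmap p t c i1).1 = insert p (c ⟨i1.val - 1,
      lt_of_le_of_lt (Nat.sub_le _ _) i1.isLt⟩).1 := by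
    have ap := Fmap_t_apply p hc ht ha htt i1
    rw [if_pos (show bN p c - t + 1 ≤ i1.val ∧ i1.val ≤ bN p c by omega)] at ap
    exact ap
  have he0 : (Fmap p t c i0).1 = (c i0).1 := by
    have ap := Fmap_t_apply p hc ht ha htt i0
    rw [if_neg (show ¬ (bN p c - t + 1 ≤ i0.val ∧ i0.val ≤ bN p c) by omega)] at ap
    exact ap
  have hie : (⟨i1.val - 1, lt_of_le_of_lt (Nat.sub_le _ _) i1.isLt⟩ : Fin (k+1)) = i0 := by
    apply Fin.ext; simp; omega
  rw [he1, he0, hie]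

lemma Fmap_t_gf : Gmap p t (Fmap p t c) = c := by
  obtain ⟨hb1, hb2, heq⟩ := id htt
  have hb' : bN p (Fmap p t c) = bN p c - t + 1 := Fmap_t_bN p hc ht ha htt
  funext i
  rw [Gmap, if_pos (Fmap_t_tight p hc ht ha htt)]
  by_cases hw : bN p c - t ≤ i.val ∧ i.val + 1 ≤ bN p c
  · rw [if_pos (by omega : bN p (Fmap p t c) - 1 ≤ i.val ∧ i.val + 2 ≤ bN p (Fmap p t c) + t)]
    have hmin : min (i.val + 1) k = i.val + 1 := by omega
    have hfin : (⟨min (i.val + 1) k, Nat.lt_succ_of_le (min_le_right _ _)⟩ : Fin (k+1))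
        = ⟨i.val + 1, by omega⟩ := by apply Fin.ext; simp [hmin]
    rw [hfin]
    have hset : (Fmap p t c ⟨i.val + 1, by omega⟩).1 = insert p (c i).1 := by
      have ap := Fmap_t_apply p hc ht ha htt (⟨i.val + 1, by omega⟩ : Fin (k+1))
      rw [if_pos (show bN p c - t + 1 ≤ (⟨i.val + 1, by omega⟩ : Fin (k+1)).val ∧
        (⟨i.val + 1, by omega⟩ : Fin (k+1)).val ≤ bN p c by simp; omega)] at ap
      exact ap
    have hpi : p ∉ (c i).1 := by rw [mem_p_iff p hc i]; omega
    have hdiff : (Fmap p t c ⟨i.val + 1, by omega⟩).1 \ {p} = (c i).1 := by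
      rw [hset, Set.insert_diff_self_of_notMem hpi]
    apply Subtype.ext
    rw [subp_spec (by rw [hdiff]; exact (c i).2), hdiff]
  · rw [if_neg (by omega : ¬ (bN p (Fmap p t c) - 1 ≤ i.val ∧ i.val + 2 ≤ bN p (Fmap p t c) + t))]
    apply Subtype.ext
    rw [Fmap_t_apply p hc ht ha htt i]
    by_cases hwf : bN p c - t + 1 ≤ i.val ∧ i.val ≤ bN p c
    · -- i = bN
      rw [if_pos hwf]
      have hib : i.val = bN p c := by omega
      exact (tight_eqv p hc ht ha htt i ⟨i.val - 1, lt_of_le_of_lt (Nat.sub_le _ _) i.isLt⟩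
        hib (by simp [hib])).symm
    · rw [if_neg hwf]

end TF

lemma tight_intro (hb1 : 1 ≤ bN p c) (hb2 : bN p c ≤ k) (i j : Fin (k+1))
    (hi : i.val = bN p c - 1) (hj : j.val = bN p c)
    (he : (c j).1 = insert p (c i).1) : Tight p c := by
  refine ⟨hb1, hb2, ?_⟩
  obtain ⟨iv, hlti⟩ := i
  obtain ⟨jv, hltj⟩ := j
  simp only at hi hj he
  subst hi; subst hj
  exact he

section NTG

variable (hc : StrictMono c) (ht : 1 ≤ t) (hd : bN p c + t ≤ dN p c) (hnt : ¬ Tight p c)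
include hc ht hd hnt

lemma Gmap_nt_apply (i : Fin (k+1)) :
    (Gmap p t c i).1 =
      if bN p c ≤ i.val ∧ i.val < bN p c + t then (c i).1 \ {p} else (c i).1 := by
  rw [Gmap, if_neg hnt]
  by_cases hw : bN p c ≤ i.val ∧ i.val < bN p c + t
  · rw [if_pos hw, if_pos hw]
    refine subp_spec ((lower_diff_iff p (c i)).mpr (fun q hq hm => ?_))
    exact absurd ((high_iff p hc i).mp ⟨q, hq, hm⟩) (by omega)
  · rw [if_neg hw, if_neg hw]

lemma Gmap_nt_bN : bN p (Gmap p t c) = bN p c + t := by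
  have hdle := dN_le p c
  apply bN_eq p (by omega)
  intro i
  rw [Gmap_nt_apply p hc ht hd hnt i]
  by_cases hw : bN p c ≤ i.val ∧ i.val < bN p c + t
  · rw [if_pos hw]
    simp only [Set.mem_diff, Set.mem_singleton_iff]
    exact ⟨fun h => absurd trivial h.2, fun h => by omega⟩
  · rw [if_neg hw, mem_p_iff p hc i]
    omega

lemma Gmap_nt_aN : aN p (Gmap p t c) = aN p c := by
  have hab := aN_le_bN p hc
  apply aN_eq p (aN_le p c)
  intro i
  by_cases hw : bN p c ≤ i.val ∧ i.val < bN p c + t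
  · constructor
    · intro _; omega
    · intro _ q hq
      rw [Gmap_nt_apply p hc ht hd hnt i, if_pos hw]
      exact ⟨((low_iff p hc i).mpr (by omega)) q hq, fun he => absurd he hq.ne⟩
  · rw [show (∀ q, q < p → q ∈ (Gmap p t c i).1) ↔ (∀ q, q < p → q ∈ (c i).1) by
      rw [Gmap_nt_apply p hc ht hd hnt i, if_neg hw]]
    exact low_iff p hc i

lemma Gmap_nt_dN : dN p (Gmap p t c) = dN p c := by
  apply dN_eq p (dN_le p c)
  intro i
  rw [show (∃ q, p < q ∧ q ∈ (Gmap p t c i).1) ↔ (∃ q, p < q ∧ q ∈ (c i).1) from ?_,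
    high_iff p hc i]
  rw [Gmap_nt_apply p hc ht hd hnt i]
  by_cases hw : bN p c ≤ i.val ∧ i.val < bN p c + t
  · rw [if_pos hw]
    constructor
    · rintro ⟨q, hq, hm, _⟩
      exact ⟨q, hq, hm⟩
    · rintro ⟨q, hq, hm⟩
      exact ⟨q, hq, hm, fun he => absurd he hq.ne'⟩
  · rw [if_neg hw]

lemma Gmap_nt_sm : StrictMono (Gmap p t c) := by
  apply strictMono_adj
  intro i j hij
  rw [oi_lt_iff, Gmap_nt_apply p hc ht hd hnt i, Gmap_nt_apply p hc ht hd hnt j]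
  have hjlt := j.isLt
  by_cases hwi : bN p c ≤ i.val ∧ i.val < bN p c + t
  · by_cases hwj : bN p c ≤ j.val ∧ j.val < bN p c + t
    · rw [if_pos hwi, if_pos hwj]
      obtain ⟨hsub, x, hx, hnx⟩ := oi_lt_elim (hc (show i < j by rw [Fin.lt_def]; omega))
      have hpi : p ∈ (c i).1 := (mem_p_iff p hc i).mpr (by omega)
      have hxp : x ≠ p := fun he => hnx (he ▸ hpi)
      exact sssub (Set.diff_subset_diff_left hsub) (x := x) ⟨hx, hxp⟩ (fun h => hnx h.1)
    · -- i = bN + t - 1, j = bN + t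
      rw [if_pos hwi, if_neg hwj]
      have hpj : p ∈ (c j).1 := (mem_p_iff p hc j).mpr (by omega)
      refine sssub ?_ (x := p) hpj (fun h => h.2 rfl)
      exact subset_trans Set.diff_subset (oi_lt_elim (hc (show i < j by rw [Fin.lt_def]; omega))).1
  · by_cases hwj : bN p c ≤ j.val ∧ j.val < bN p c + t
    · -- i = bN - 1, j = bN
      rw [if_neg hwi, if_pos hwj]
      have hpi : p ∉ (c i).1 := by rw [mem_p_iff p hc i]; omega
      have hpj : p ∈ (c j).1 := (mem_p_iff p hc j).mpr (by omega)
      have hsub : (c i).1 ⊆ (c j).1 \ {p} := by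
        intro x hx
        exact ⟨(oi_lt_elim (hc (show i < j by rw [Fin.lt_def]; omega))).1 hx,
          fun he => hpi (he ▸ hx)⟩
      refine ssubset_of_subset_of_ne hsub ?_
      intro heqset
      apply hnt
      refine tight_intro p (i := i) (j := j) (by omega) (by omega) (by omega) (by omega) ?_
      rw [heqset, Set.insert_diff_singleton, Set.insert_eq_self.mpr hpj]
    · rw [if_neg hwi, if_neg hwj]
      exact oi_lt_iff.mp (hc (show i < j by rw [Fin.lt_def]; omega))

lemma Gmap_nt_ntight : ¬ Tight p (Gmap p t c) := by
  rintro ⟨h1, h2, heq⟩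
  have hb' : bN p (Gmap p t c) = bN p c + t := Gmap_nt_bN p hc ht hd hnt
  set i1 : Fin (k+1) := ⟨bN p (Gmap p t c), by omega⟩ with hi1
  set i0 : Fin (k+1) := ⟨bN p (Gmap p t c) - 1, by omega⟩ with hi0
  have hv1 : i1.val = bN p c + t := by simp [hi1, hb']
  have hv0 : i0.val = bN p c + t - 1 := by simp [hi0, hb']
  have he1 : (Gmap p t c i1).1 = (c i1).1 := by
    have ap := Gmap_nt_apply p hc ht hd hnt i1
    rw [if_neg (show ¬ (bN p c ≤ i1.val ∧ i1.val < bN p c + t) by omega)] at ap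
    exact ap
  have he0 : (Gmap p t c i0).1 = (c i0).1 \ {p} := by
    have ap := Gmap_nt_apply p hc ht hd hnt i0
    rw [if_pos (show bN p c ≤ i0.val ∧ i0.val < bN p c + t by omega)] at ap
    exact ap
  rw [he1, he0, Set.insert_diff_singleton,
    Set.insert_eq_self.mpr ((mem_p_iff p hc i0).mpr (by omega))] at heq
  obtain ⟨hsub, x, hx, hnx⟩ := oi_lt_elim (hc (show i0 < i1 by rw [Fin.lt_def]; omega))
  rw [heq] at hx
  exact hnx hx

lemma Gmap_nt_fg : Fmap p t (Gmap p t c) = c := by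
  funext i
  rw [Fmap, if_neg (Gmap_nt_ntight p hc ht hd hnt)]
  have hb' : bN p (Gmap p t c) = bN p c + t := Gmap_nt_bN p hc ht hd hnt
  by_cases hw : bN p c ≤ i.val ∧ i.val < bN p c + t
  · rw [if_pos (by omega : bN p (Gmap p t c) - t ≤ i.val ∧ i.val < bN p (Gmap p t c))]
    have hpi : p ∈ (c i).1 := (mem_p_iff p hc i).mpr (by omega)
    have hset : (Gmap p t c i).1 = (c i).1 \ {p} := by
      have ap := Gmap_nt_apply p hc ht hd hnt i
      rw [if_pos hw] at ap
      exact ap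
    have huni : (Gmap p t c i).1 ∪ {p} = (c i).1 := by
      rw [hset, Set.diff_union_self, Set.union_singleton, Set.insert_eq_self.mpr hpi]
    apply Subtype.ext
    rw [addp_spec (show IsLowerSet ((Gmap p t c i).1 ∪ {p}) by rw [huni]; exact (c i).2)]
    rw [← Set.union_singleton, huni]
  · rw [if_neg (by omega : ¬ (bN p (Gmap p t c) - t ≤ i.val ∧ i.val < bN p (Gmap p t c)))]
    apply Subtype.ext
    have ap := Gmap_nt_apply p hc ht hd hnt i
    rw [if_neg hw] at ap
    exact ap

end NTG

lemma tight_eqv' (htt : Tight p c) (i j : Fin (k+1)) (hi : i.val = bN p c)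
    (hj : j.val = bN p c - 1) : (c i).1 = insert p (c j).1 := by
  obtain ⟨hb1, hb2, heq⟩ := id htt
  obtain ⟨iv, hlti⟩ := i
  obtain ⟨jv, hltj⟩ := j
  simp only at hi hj
  subst hi; subst hj
  exact heq

section TG

variable (hc : StrictMono c) (ht : 1 ≤ t) (hd : bN p c + t ≤ dN p c) (htt : Tight p c)
include hc ht hd htt

lemma Gmap_t_apply_in (i : Fin (k+1)) (hwin : bN p c - 1 ≤ i.val ∧ i.val + 2 ≤ bN p c + t) :
    (Gmap p t c i).1 = (c ⟨i.val + 1, by have := dN_le p c; omega⟩).1 \ {p} := by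
  rw [Gmap, if_pos htt, if_pos hwin]
  have hfin : (⟨min (i.val + 1) k, Nat.lt_succ_of_le (min_le_right _ _)⟩ : Fin (k+1))
      = ⟨i.val + 1, by have := dN_le p c; omega⟩ := by
    apply Fin.ext
    have := dN_le p c
    simp; omega
  rw [hfin]
  refine subp_spec ((lower_diff_iff p _).mpr (fun q hq hm => ?_))
  exact absurd ((high_iff p hc _).mp ⟨q, hq, hm⟩) (by simp; omega)

lemma Gmap_t_apply_out (i : Fin (k+1)) (hout : ¬ (bN p c - 1 ≤ i.val ∧ i.val + 2 ≤ bN p c + t)) :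
    (Gmap p t c i).1 = (c i).1 := by
  rw [Gmap, if_pos htt, if_neg hout]

lemma Gmap_t_bN : bN p (Gmap p t c) = bN p c + t - 1 := by
  obtain ⟨hb1, hb2, _⟩ := id htt
  have hdle := dN_le p c
  apply bN_eq p (by omega)
  intro i
  by_cases hw : bN p c - 1 ≤ i.val ∧ i.val + 2 ≤ bN p c + t
  · rw [Gmap_t_apply_in p hc ht hd htt i hw]
    simp only [Set.mem_diff, Set.mem_singleton_iff]
    exact ⟨fun h => absurd trivial (by simpa using h.2), fun h => by omega⟩
  · rw [Gmap_t_apply_out p hc ht hd htt i hw, mem_p_iff p hc i]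
    omega

lemma Gmap_t_aN : aN p (Gmap p t c) = aN p c := by
  have hta := tight_aN p hc htt
  apply aN_eq p (aN_le p c)
  intro i
  by_cases hw : bN p c - 1 ≤ i.val ∧ i.val + 2 ≤ bN p c + t
  · constructor
    · intro _; omega
    · intro _ q hq
      rw [Gmap_t_apply_in p hc ht hd htt i hw]
      exact ⟨((low_iff p hc _).mpr (by simp; omega)) q hq, fun he => absurd he hq.ne⟩
  · rw [show (∀ q, q < p → q ∈ (Gmap p t c i).1) ↔ (∀ q, q < p → q ∈ (c i).1) by
      rw [Gmap_t_apply_out p hc ht hd htt i hw]]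
    exact low_iff p hc i

lemma Gmap_t_dN : dN p (Gmap p t c) = dN p c := by
  apply dN_eq p (dN_le p c)
  intro i
  by_cases hw : bN p c - 1 ≤ i.val ∧ i.val + 2 ≤ bN p c + t
  · rw [show (∃ q, p < q ∧ q ∈ (Gmap p t c i).1) ↔
        (∃ q, p < q ∧ q ∈ (c ⟨i.val + 1, by have := dN_le p c; omega⟩).1) from ?_]
    · rw [high_iff p hc _]
      simp only
      omega
    · rw [Gmap_t_apply_in p hc ht hd htt i hw]
      constructor
      · rintro ⟨q, hq, hm, _⟩
        exact ⟨q, hq, hm⟩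
      · rintro ⟨q, hq, hm⟩
        exact ⟨q, hq, hm, fun he => absurd he hq.ne'⟩
  · rw [show (∃ q, p < q ∧ q ∈ (Gmap p t c i).1) ↔ (∃ q, p < q ∧ q ∈ (c i).1) by
      rw [Gmap_t_apply_out p hc ht hd htt i hw]]
    exact high_iff p hc i

lemma Gmap_t_sm : StrictMono (Gmap p t c) := by
  obtain ⟨hb1, hb2, _⟩ := id htt
  apply strictMono_adj
  intro i j hij
  have hjlt := j.isLt
  rw [oi_lt_iff]
  by_cases hwi : bN p c - 1 ≤ i.val ∧ i.val + 2 ≤ bN p c + t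
  · by_cases hwj : bN p c - 1 ≤ j.val ∧ j.val + 2 ≤ bN p c + t
    · rw [Gmap_t_apply_in p hc ht hd htt i hwi, Gmap_t_apply_in p hc ht hd htt j hwj]
      have hlt : (⟨i.val + 1, by have := dN_le p c; omega⟩ : Fin (k+1))
          < ⟨j.val + 1, by have := dN_le p c; omega⟩ := by rw [Fin.lt_def]; simp; omega
      obtain ⟨hsub, x, hx, hnx⟩ := oi_lt_elim (hc hlt)
      have hpi : p ∈ (c (⟨i.val + 1, by have := dN_le p c; omega⟩ : Fin (k+1))).1 :=
        (mem_p_iff p hc _).mpr (by simp; omega)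
      have hxp : x ≠ p := fun he => hnx (he ▸ hpi)
      exact sssub (Set.diff_subset_diff_left hsub) (x := x) ⟨hx, hxp⟩ (fun h => hnx h.1)
    · -- i = bN + t - 2, j = bN + t - 1
      rw [Gmap_t_apply_in p hc ht hd htt i hwi, Gmap_t_apply_out p hc ht hd htt j hwj]
      have hie : (⟨i.val + 1, by have := dN_le p c; omega⟩ : Fin (k+1)) = j := by
        apply Fin.ext; simp; omega
      rw [hie]
      have hpj : p ∈ (c j).1 := (mem_p_iff p hc j).mpr (by omega)
      exact sssub Set.diff_subset (x := p) hpj (fun h => h.2 rfl)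
  · by_cases hwj : bN p c - 1 ≤ j.val ∧ j.val + 2 ≤ bN p c + t
    · -- i = bN - 2, j = bN - 1
      rw [Gmap_t_apply_in p hc ht hd htt j hwj, Gmap_t_apply_out p hc ht hd htt i hwi]
      have hpj : p ∉ (c j).1 := by rw [mem_p_iff p hc j]; omega
      have he : (c (⟨j.val + 1, by have := dN_le p c; omega⟩ : Fin (k+1))).1 \ {p}
          = (c j).1 := by
        rw [tight_eqv' p htt _ j (by simp; omega) (by omega),
          Set.insert_diff_self_of_notMem hpj]
      rw [he]
      exact oi_lt_iff.mp (hc (show i < j by rw [Fin.lt_def]; omega))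
    · rw [Gmap_t_apply_out p hc ht hd htt i hwi, Gmap_t_apply_out p hc ht hd htt j hwj]
      exact oi_lt_iff.mp (hc (show i < j by rw [Fin.lt_def]; omega))

lemma Gmap_t_tight : Tight p (Gmap p t c) := by
  obtain ⟨hb1, hb2, _⟩ := id htt
  have hdle := dN_le p c
  have hb' : bN p (Gmap p t c) = bN p c + t - 1 := Gmap_t_bN p hc ht hd htt
  set j : Fin (k+1) := ⟨bN p c + t - 1, by omega⟩ with hj
  set i : Fin (k+1) := ⟨bN p c + t - 2, by omega⟩ with hi
  have hvj : j.val = bN p c + t - 1 := rfl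
  have hvi : i.val = bN p c + t - 2 := rfl
  refine tight_intro p (by omega) (by omega) i j (by omega) (by omega) ?_
  have hej : (Gmap p t c j).1 = (c j).1 :=
    Gmap_t_apply_out p hc ht hd htt j (by omega)
  have hei : (Gmap p t c i).1 = (c ⟨i.val + 1, by have := dN_le p c; omega⟩).1 \ {p} :=
    Gmap_t_apply_in p hc ht hd htt i (by omega)
  have hii : (⟨i.val + 1, by have := dN_le p c; omega⟩ : Fin (k+1)) = j := by
    apply Fin.ext
    show i.val + 1 = j.val
    omega
  rw [hej, hei, hii, Set.insert_diff_singleton,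
    Set.insert_eq_self.mpr ((mem_p_iff p hc j).mpr (by omega))]

lemma Gmap_t_fg : Fmap p t (Gmap p t c) = c := by
  obtain ⟨hb1, hb2, _⟩ := id htt
  have hdle := dN_le p c
  have hb' : bN p (Gmap p t c) = bN p c + t - 1 := Gmap_t_bN p hc ht hd htt
  funext i
  rw [Fmap, if_pos (Gmap_t_tight p hc ht hd htt)]
  by_cases hw : bN p c ≤ i.val ∧ i.val ≤ bN p c + t - 1
  · rw [if_pos (show bN p (Gmap p t c) - t + 1 ≤ i.val ∧ i.val ≤ bN p (Gmap p t c) by omega)]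
    have hpi : p ∈ (c i).1 := (mem_p_iff p hc i).mpr (by omega)
    set i0 : Fin (k+1) := ⟨i.val - 1, lt_of_le_of_lt (Nat.sub_le _ _) i.isLt⟩ with hi0
    have hvi0 : i0.val = i.val - 1 := rfl
    have hei : (Gmap p t c i0).1 = (c ⟨i0.val + 1, by have := dN_le p c; omega⟩).1 \ {p} :=
      Gmap_t_apply_in p hc ht hd htt i0 (by omega)
    have hii : (⟨i0.val + 1, by have := dN_le p c; omega⟩ : Fin (k+1)) = i := by
      apply Fin.ext
      show i0.val + 1 = i.val
      omega
    rw [hii] at hei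
    have huni : (Gmap p t c i0).1 ∪ {p} = (c i).1 := by
      rw [hei, Set.diff_union_self, Set.union_singleton, Set.insert_eq_self.mpr hpi]
    apply Subtype.ext
    rw [addp_spec (show IsLowerSet ((Gmap p t c i0).1 ∪ {p}) by rw [huni]; exact (c i).2)]
    rw [← Set.union_singleton, huni]
  · rw [if_neg (show ¬ (bN p (Gmap p t c) - t + 1 ≤ i.val ∧ i.val ≤ bN p (Gmap p t c)) by omega)]
    apply Subtype.ext
    by_cases hw2 : bN p c - 1 ≤ i.val ∧ i.val + 2 ≤ bN p c + t
    · -- i = bN - 1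
      have hib : i.val = bN p c - 1 := by omega
      have hei : (Gmap p t c i).1 = (c ⟨i.val + 1, by have := dN_le p c; omega⟩).1 \ {p} :=
        Gmap_t_apply_in p hc ht hd htt i hw2
      rw [hei, tight_eqv' p htt _ i (by simp; omega) hib,
        Set.insert_diff_self_of_notMem (by rw [mem_p_iff p hc i]; omega)]
    · exact Gmap_t_apply_out p hc ht hd htt i hw2

end TG
end maps

lemma layer_sum (n a b : ℕ) (hab : a ≤ b) (hb : b ≤ n) :
    (∑ t ∈ Finset.range n, if a + (t+1) ≤ b then 1 else 0) = b - a := by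
  rw [Finset.sum_boole]
  have : (Finset.range n).filter (fun t => a + (t+1) ≤ b) = Finset.range (b - a) := by
    ext t
    simp only [Finset.mem_filter, Finset.mem_range]
    omega
  rw [this, Finset.card_range]
  simp

section counting

variable [Fintype (OIdeal α)]

lemma step_t (p : α) (k t : ℕ) (ht : 1 ≤ t) :
    ((Finset.univ.filter fun c : Fin (k+1) → OIdeal α =>
      StrictMono c ∧ aN p c + t ≤ bN p c)).card
    = ((Finset.univ.filter fun c : Fin (k+1) → OIdeal α =>
      StrictMono c ∧ bN p c + t ≤ dN p c)).card := by
  refine Finset.card_bij' (fun c _ => Fmap p t c) (fun c _ => Gmap p t c) ?_ ?_ ?_ ?_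
  · intro c hcmem
    obtain ⟨hc, hat⟩ := (Finset.mem_filter.mp hcmem).2
    by_cases htt : Tight p c
    · refine Finset.mem_filter.mpr ⟨Finset.mem_univ _, Fmap_t_sm p hc ht hat htt, ?_⟩
      rw [Fmap_t_bN p hc ht hat htt, Fmap_t_dN p hc ht hat htt]
      have := tight_dN p hc htt
      omega
    · refine Finset.mem_filter.mpr ⟨Finset.mem_univ _, Fmap_nt_sm p hc ht hat htt, ?_⟩
      rw [Fmap_nt_bN p hc ht hat htt, Fmap_nt_dN p hc ht hat htt]
      have := bN_le_dN p hc
      omega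
  · intro c hcmem
    obtain ⟨hc, hdt⟩ := (Finset.mem_filter.mp hcmem).2
    by_cases htt : Tight p c
    · refine Finset.mem_filter.mpr ⟨Finset.mem_univ _, Gmap_t_sm p hc ht hdt htt, ?_⟩
      rw [Gmap_t_bN p hc ht hdt htt, Gmap_t_aN p hc ht hdt htt]
      have := tight_aN p hc htt
      omega
    · refine Finset.mem_filter.mpr ⟨Finset.mem_univ _, Gmap_nt_sm p hc ht hdt htt, ?_⟩
      rw [Gmap_nt_bN p hc ht hdt htt, Gmap_nt_aN p hc ht hdt htt]
      have := aN_le_bN p hc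
      omega
  · intro c hcmem
    obtain ⟨hc, hat⟩ := (Finset.mem_filter.mp hcmem).2
    by_cases htt : Tight p c
    · exact Fmap_t_gf p hc ht hat htt
    · exact Fmap_nt_gf p hc ht hat htt
  · intro c hcmem
    obtain ⟨hc, hdt⟩ := (Finset.mem_filter.mp hcmem).2
    by_cases htt : Tight p c
    · exact Gmap_t_fg p hc ht hdt htt
    · exact Gmap_nt_fg p hc ht hdt htt

lemma sum_marks_eq (p : α) (k : ℕ) :
    (∑ c ∈ Finset.univ.filter (fun c : Fin (k+1) → OIdeal α => StrictMono c),
      (bN p c - aN p c))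
    = ∑ c ∈ Finset.univ.filter (fun c : Fin (k+1) → OIdeal α => StrictMono c),
      (dN p c - bN p c) := by
  have hlhs : ∀ c ∈ Finset.univ.filter (fun c : Fin (k+1) → OIdeal α => StrictMono c),
      bN p c - aN p c = ∑ t ∈ Finset.range (k+1), if aN p c + (t+1) ≤ bN p c then 1 else 0 := by
    intro c hcm
    have hc := (Finset.mem_filter.mp hcm).2
    rw [layer_sum (k+1) _ _ (aN_le_bN p hc) (bN_le p c)]
  have hrhs : ∀ c ∈ Finset.univ.filter (fun c : Fin (k+1) → OIdeal α => StrictMono c),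
      dN p c - bN p c = ∑ t ∈ Finset.range (k+1), if bN p c + (t+1) ≤ dN p c then 1 else 0 := by
    intro c hcm
    have hc := (Finset.mem_filter.mp hcm).2
    rw [layer_sum (k+1) _ _ (bN_le_dN p hc) (dN_le p c)]
  rw [Finset.sum_congr rfl hlhs, Finset.sum_congr rfl hrhs]
  rw [Finset.sum_comm]
  conv_rhs => rw [Finset.sum_comm]
  apply Finset.sum_congr rfl
  intro t _
  rw [Finset.sum_boole, Finset.sum_boole, Finset.filter_filter, Finset.filter_filter]
  have := step_t (α := α) p k (t+1) (by omega)
  exact_mod_cast this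

lemma count_main (p : α) (k : ℕ) :
    (∑ I ∈ Finset.univ.filter (fun I : OIdeal α => p ∉ I.1 ∧ IsLowerSet (I.1 ∪ {p})),
      (Finset.univ.filter fun c : Fin (k+1) → OIdeal α => StrictMono c ∧ ∃ i, c i = I).card)
    = ∑ I ∈ Finset.univ.filter (fun I : OIdeal α => p ∈ I.1 ∧ IsLowerSet (I.1 \ {p})),
      (Finset.univ.filter fun c : Fin (k+1) → OIdeal α => StrictMono c ∧ ∃ i, c i = I).card := by
  have e0 : ∀ I : OIdeal α,
      (Finset.univ.filter fun c : Fin (k+1) → OIdeal α => StrictMono c ∧ ∃ i, c i = I).card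
      = ∑ c ∈ Finset.univ.filter (fun c : Fin (k+1) → OIdeal α => StrictMono c),
          if ∃ i, c i = I then 1 else 0 := by
    intro I
    rw [Finset.sum_boole, Finset.filter_filter]
    simp
  have ebij : ∀ (Q : OIdeal α → Prop) (c : Fin (k+1) → OIdeal α), StrictMono c →
      ∀ (s : Finset (OIdeal α)), (∀ I, I ∈ s ↔ Q I) →
      ∀ (m : Finset (Fin (k+1))), (∀ i, i ∈ m ↔ Q (c i)) →
      (s.filter fun I => ∃ i, c i = I).card = m.card := by
    intro Q c hc s hs m hm
    refine (Finset.card_bij (fun i _ => c i) ?_ ?_ ?_).symm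
    · intro i hi
      refine Finset.mem_filter.mpr ⟨(hs _).mpr ((hm i).mp hi), ⟨i, rfl⟩⟩
    · intro i1 h1 i2 h2 he
      exact hc.injective he
    · intro I hI
      have h' := Finset.mem_filter.mp hI
      obtain ⟨i, hci⟩ := h'.2
      refine ⟨i, (hm i).mpr (by rw [hci]; exact (hs I).mp h'.1), hci⟩
  have hIn : (∑ I ∈ Finset.univ.filter (fun I : OIdeal α => p ∉ I.1 ∧ IsLowerSet (I.1 ∪ {p})),
      (Finset.univ.filter fun c : Fin (k+1) → OIdeal α => StrictMono c ∧ ∃ i, c i = I).card)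
      = ∑ c ∈ Finset.univ.filter (fun c : Fin (k+1) → OIdeal α => StrictMono c),
        (bN p c - aN p c) := by
    rw [Finset.sum_congr rfl (fun I _ => e0 I), Finset.sum_comm]
    apply Finset.sum_congr rfl
    intro c hcm
    have hc := (Finset.mem_filter.mp hcm).2
    rw [Finset.sum_boole]
    norm_cast
    rw [← inMarks_card p hc]
    exact ebij (fun I => p ∉ I.1 ∧ IsLowerSet (I.1 ∪ {p})) c hc _ (fun I => by simp) _
      (fun i => by simp)
  have hOut : (∑ I ∈ Finset.univ.filter (fun I : OIdeal α => p ∈ I.1 ∧ IsLowerSet (I.1 \ {p})),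
      (Finset.univ.filter fun c : Fin (k+1) → OIdeal α => StrictMono c ∧ ∃ i, c i = I).card)
      = ∑ c ∈ Finset.univ.filter (fun c : Fin (k+1) → OIdeal α => StrictMono c),
        (dN p c - bN p c) := by
    rw [Finset.sum_congr rfl (fun I _ => e0 I), Finset.sum_comm]
    apply Finset.sum_congr rfl
    intro c hcm
    have hc := (Finset.mem_filter.mp hcm).2
    rw [Finset.sum_boole]
    norm_cast
    rw [← outMarks_card p hc]
    exact ebij (fun I => p ∈ I.1 ∧ IsLowerSet (I.1 \ {p})) c hc _ (fun I => by simp) _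
      (fun i => by simp)
  rw [hIn, hOut]
  exact sum_marks_eq p k

end counting
end Aux

/-- Lemma `lem:chaintogsym`.  For any finite poset `P` and any
`k = 0, 1, …, #P`, the `k`-chain distribution `chain(k)` on `J(P)` is toggle-symmetric. -/
theorem statement4 (α : Type*) [Finite α] [PartialOrder α] (k : ℕ) (hk : k ≤ Nat.card α) :
    ToggleSymmetric (chainDist (OIdeal α) k) := by
  intro p
  letI : Fintype α := Fintype.ofFinite α
  letI : Fintype (OIdeal α) := Fintype.ofFinite _
  rw [expect, expect, finsum_eq_sum_of_fintype, finsum_eq_sum_of_fintype]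
  have hterm : ∀ (f : OIdeal α → ℝ) (I : OIdeal α), chainDist (OIdeal α) k I * f I
      = ((Nat.card {c : Fin (k+1) → OIdeal α // StrictMono c ∧ ∃ i, c i = I} : ℝ) * f I) /
        (((k : ℝ) + 1) * (Nat.card {c : Fin (k + 1) → OIdeal α // StrictMono c} : ℝ)) := by
    intro f I
    rw [chainDist]
    ring
  rw [Finset.sum_congr rfl (fun I _ => hterm (Tplus p) I),
    Finset.sum_congr rfl (fun I _ => hterm (Tminus p) I), ← Finset.sum_div, ← Finset.sum_div]
  congr 1
  have hIn : (∑ I : OIdeal α,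
        (Nat.card {c : Fin (k+1) → OIdeal α // StrictMono c ∧ ∃ i, c i = I} : ℝ) * Tplus p I)
      = ∑ I ∈ Finset.univ.filter (fun I : OIdeal α => p ∉ I.1 ∧ IsLowerSet (I.1 ∪ {p})),
        (Nat.card {c : Fin (k+1) → OIdeal α // StrictMono c ∧ ∃ i, c i = I} : ℝ) := by
    rw [Finset.sum_filter]
    apply Finset.sum_congr rfl
    intro I _
    rw [Tplus]
    by_cases h : p ∉ I.1 ∧ IsLowerSet (I.1 ∪ {p})
    · rw [if_pos h, if_pos h, mul_one]
    · rw [if_neg h, if_neg h, mul_zero]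
  have hOut : (∑ I : OIdeal α,
        (Nat.card {c : Fin (k+1) → OIdeal α // StrictMono c ∧ ∃ i, c i = I} : ℝ) * Tminus p I)
      = ∑ I ∈ Finset.univ.filter (fun I : OIdeal α => p ∈ I.1 ∧ IsLowerSet (I.1 \ {p})),
        (Nat.card {c : Fin (k+1) → OIdeal α // StrictMono c ∧ ∃ i, c i = I} : ℝ) := by
    rw [Finset.sum_filter]
    apply Finset.sum_congr rfl
    intro I _
    rw [Tminus]
    by_cases h : p ∈ I.1 ∧ IsLowerSet (I.1 \ {p})
    · rw [if_pos h, if_pos h, mul_one]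
    · rw [if_neg h, if_neg h, mul_zero]
  rw [hIn, hOut]
  have hN : ∀ I : OIdeal α,
      (Nat.card {c : Fin (k+1) → OIdeal α // StrictMono c ∧ ∃ i, c i = I})
      = (Finset.univ.filter fun c : Fin (k+1) → OIdeal α => StrictMono c ∧ ∃ i, c i = I).card := by
    intro I
    rw [Nat.card_eq_fintype_card, Fintype.card_subtype]
  rw [Finset.sum_congr rfl (fun I _ => by rw [hN I] :
    ∀ I ∈ Finset.univ.filter (fun I : OIdeal α => p ∉ I.1 ∧ IsLowerSet (I.1 ∪ {p})),
      ((Nat.card {c : Fin (k+1) → OIdeal α // StrictMono c ∧ ∃ i, c i = I} : ℝ))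
      = ((Finset.univ.filter fun c : Fin (k+1) → OIdeal α =>
          StrictMono c ∧ ∃ i, c i = I).card : ℝ))]
  rw [Finset.sum_congr rfl (fun I _ => by rw [hN I] :
    ∀ I ∈ Finset.univ.filter (fun I : OIdeal α => p ∈ I.1 ∧ IsLowerSet (I.1 \ {p})),
      ((Nat.card {c : Fin (k+1) → OIdeal α // StrictMono c ∧ ∃ i, c i = I} : ℝ))
      = ((Finset.univ.filter fun c : Fin (k+1) → OIdeal α =>
          StrictMono c ∧ ∃ i, c i = I).card : ℝ))]
  exact_mod_cast Aux.count_main p k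


end CDEPaper
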